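/- Let λ > 0 and a > 2, and let p_λ be the SCAD penalty. Then for every x ∈ ℝ, λ|x| ≤ p_λ(|x|) + x²/(2(a−1)). -/

import Mathlib

/-- The SCAD penalty with regularization parameter `lam` and non-convexity parameter `a`. -/
noncomputable def scad (lam a t : ℝ) : ℝ :=
  if t ≤ lam then lam * t
  else if t ≤ a * lam then -(t ^ 2 - 2 * a * lam * t + lam ^ 2) / (2 * (a - 1))
  else (a + 1) * lam ^ 2 / 2

/-- Lower bound on SCAD by the ℓ₁ penalty minus a quadratic:
  `λ|x| ≤ p_λ(|x|) + x²/(2(a−1))` for all `x`. -/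
theorem scad_l1_lower_bound (lam a : ℝ) (hlam : 0 < lam) (ha : 2 < a) (x : ℝ) :
    lam * |x| ≤ scad lam a |x| + x ^ 2 / (2 * (a - 1)) := by
  have ht : 0 ≤ |x| := abs_nonneg x
  have hx2 : x ^ 2 = |x| ^ 2 := (sq_abs x).symm
  have ha1 : 0 < a - 1 := by linarith
  unfold scad
  split_ifs with h1 h2
  · have h0 : 0 ≤ x ^ 2 / (2 * (a - 1)) := by positivity
    linarith
  · rw [hx2, ← add_div, le_div_iff₀ (by linarith : (0:ℝ) < 2 * (a - 1))]
    push_neg at h1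
    nlinarith
  · push_neg at h1 h2
    rw [hx2, div_add_div _ _ (by norm_num : (2:ℝ) ≠ 0) (by positivity), le_div_iff₀ (by positivity)]
    nlinarith [sq_nonneg (|x| - (a - 1) * lam), sq_nonneg lam]
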